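/- Let K = ℝ((t^ℝ)) be the field of Hahn series over ℝ with value group ℝ and canonical valuation ν, let V be the space of finitely supported sequences a = (a_0, a_1, a_2, …) with entries in K, and let q(a) := Σ_i a_i². Define d(a,b) := 2^{−ν(q(a−b))} on V. Then (V, d) fails property (MC): there exist a sequence (x_n) in V and radii r_n with r_n ≥ 4^{−1} > 0 for all n, such that the closed balls B_n := {y ∈ V : d(x_n, y) ≤ r_n} satisfy B_{n+1} ⊆ B_n for all n, yet ⋂_n B_n = ∅. -/

import Mathlib

/-- The quadratic form `q(a) = Σᵢ aᵢ²` on the space of finitely supported sequences with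
entries in the Hahn series field `ℝ((t^ℝ))`. -/
noncomputable def qForm (a : ℕ →₀ HahnSeries ℝ ℝ) : HahnSeries ℝ ℝ :=
  a.sum fun _ v => v ^ 2

/-- The ultrametric `d(a,b) = 2^{-ν(q(a-b))}` on the space of finitely supported sequences,
where `ν = orderTop` is the canonical valuation of `ℝ((t^ℝ))` (with `2^{-∞} = 0`). -/
noncomputable def dForm (a b : ℕ →₀ HahnSeries ℝ ℝ) : ℝ :=
  WithTop.recTopCoe 0 (fun r : ℝ => (2 : ℝ) ^ (-r)) (HahnSeries.orderTop (qForm (a - b)))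

open HahnSeries Finset

/-- orderTop of a finite sum is at least the min of the orderTops. -/
lemma le_orderTop_finsetSum {s : Finset ℕ} {f : ℕ → HahnSeries ℝ ℝ} {c : WithTop ℝ}
    (h : ∀ i ∈ s, c ≤ (f i).orderTop) : c ≤ (∑ i ∈ s, f i).orderTop := by
  classical
  induction s using Finset.induction with
  | empty => simp
  | @insert a s hx ih =>
    rw [Finset.sum_insert hx]
    refine le_trans ?_ min_orderTop_le_orderTop_add
    exact le_min (h a (mem_insert_self a s)) (ih fun i hi => h i (mem_insert_of_mem hi))

/-- Lower bound: if every coordinate has valuation at least `ρ`, then `q a` has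
valuation at least `2ρ`. -/
lemma le_orderTop_qForm {a : ℕ →₀ HahnSeries ℝ ℝ} {ρ : ℝ}
    (h : ∀ i, (ρ : WithTop ℝ) ≤ (a i).orderTop) :
    ((2 * ρ : ℝ) : WithTop ℝ) ≤ (qForm a).orderTop := by
  refine le_orderTop_finsetSum fun i _ => ?_
  calc ((2 * ρ : ℝ) : WithTop ℝ) = (ρ : WithTop ℝ) + (ρ : WithTop ℝ) := by
        rw [two_mul]; exact_mod_cast rfl
    _ ≤ (a i).orderTop + (a i).orderTop := add_le_add (h i) (h i)
    _ ≤ ((a i) * (a i)).orderTop := orderTop_add_le_mul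
    _ = ((a i) ^ 2).orderTop := by rw [sq]

/-- Upper bound: the valuation of `q a` is at most twice the order of any nonzero
coordinate. -/
lemma orderTop_qForm_le {a : ℕ →₀ HahnSeries ℝ ℝ} {j : ℕ} (hj : a j ≠ 0) :
    (qForm a).orderTop ≤ ((2 * (a j).order : ℝ) : WithTop ℝ) := by
  classical
  have hjmem : j ∈ a.support := Finsupp.mem_support_iff.mpr hj
  obtain ⟨i₀, hi₀, hmin⟩ :=
    a.support.exists_min_image (fun i => (a i).order) ⟨j, hjmem⟩
  set m : ℝ := (a i₀).order with hm
  have hi₀ne : a i₀ ≠ 0 := Finsupp.mem_support_iff.mp hi₀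
  -- coefficient of each square at `m + m`
  have hsq : ∀ i ∈ a.support, ((a i) ^ 2).coeff (m + m) = ((a i).coeff m) ^ 2 := by
    intro i hi
    have hine : a i ≠ 0 := Finsupp.mem_support_iff.mp hi
    rcases eq_or_lt_of_le (hmin i hi) with heq | hlt
    · rw [sq, sq, heq, coeff_mul_order_add_order (a i) (a i), leadingCoeff_eq]
    · have h1 : (a i).coeff m = 0 := coeff_eq_zero_of_lt_order hlt
      have h2 : ((a i) ^ 2).coeff (m + m) = 0 := by
        apply coeff_eq_zero_of_lt_order
        rw [sq, order_mul hine hine]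
        exact add_lt_add hlt hlt
      rw [h1, h2]; ring
  have hcoeff : (qForm a).coeff (m + m) = ∑ i ∈ a.support, ((a i).coeff m) ^ 2 := by
    rw [qForm, Finsupp.sum]
    rw [show (∑ i ∈ a.support, (a i) ^ 2).coeff (m + m)
          = ∑ i ∈ a.support, ((a i) ^ 2).coeff (m + m) from
      map_sum (coeff.addMonoidHom (m + m)) _ _]
    exact Finset.sum_congr rfl hsq
  have hpos : 0 < ∑ i ∈ a.support, ((a i).coeff m) ^ 2 := by
    refine Finset.sum_pos' (fun i _ => sq_nonneg _) ⟨i₀, hi₀, ?_⟩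
    have := coeff_order_eq_zero.not.mpr hi₀ne
    positivity
  have hne : (qForm a).coeff (m + m) ≠ 0 := by rw [hcoeff]; exact ne_of_gt hpos
  have h1 : (qForm a).orderTop ≤ ((m + m : ℝ) : WithTop ℝ) :=
    orderTop_le_of_coeff_ne_zero hne
  refine h1.trans ?_
  exact_mod_cast (by linarith [hmin j hjmem] : m + m ≤ 2 * (a j).order)

/-- Coordinatewise bound from the valuation of `q`. -/
lemma coord_le_of_qForm {a : ℕ →₀ HahnSeries ℝ ℝ} {ρ : ℝ}
    (h : ((2 * ρ : ℝ) : WithTop ℝ) ≤ (qForm a).orderTop) (i : ℕ) :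
    (ρ : WithTop ℝ) ≤ (a i).orderTop := by
  by_cases hi : a i = 0
  · simp [hi]
  · have := h.trans (orderTop_qForm_le hi)
    have h2 : 2 * ρ ≤ 2 * (a i).order := by exact_mod_cast this
    have : ρ ≤ (a i).order := by linarith
    rw [← order_eq_orderTop_of_ne_zero hi]
    exact_mod_cast this

/-- The bridge between `dForm` and the valuation. -/
lemma dForm_le_iff {x y : ℕ →₀ HahnSeries ℝ ℝ} {ρ : ℝ} :
    dForm x y ≤ (2 : ℝ) ^ (-ρ) ↔ ((ρ : WithTop ℝ)) ≤ (qForm (x - y)).orderTop := by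
  unfold dForm
  rcases ht : (qForm (x - y)).orderTop with _ | v
  · exact ⟨fun _ => le_top, fun _ => le_of_lt (by positivity : (0:ℝ) < 2 ^ (-ρ))⟩
  · show (2:ℝ) ^ (-v) ≤ 2 ^ (-ρ) ↔ ((ρ : WithTop ℝ)) ≤ ((v : ℝ) : WithTop ℝ)
    rw [Real.rpow_le_rpow_left_iff (by norm_num : (1:ℝ) < 2), neg_le_neg_iff,
      WithTop.coe_le_coe]

/-- The space of finitely supported sequences over `ℝ((t^ℝ))` with the
ultrametric induced by `ν ∘ q` fails property (MC): there is a nested sequence of closed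
balls with radii bounded below by `4⁻¹ > 0` and empty intersection. -/
theorem not_MC_qForm :
    ∃ (x : ℕ → (ℕ →₀ HahnSeries ℝ ℝ)) (r : ℕ → ℝ),
      (∀ n, (4 : ℝ)⁻¹ ≤ r n) ∧ (0 : ℝ) < (4 : ℝ)⁻¹ ∧
      (∀ n, {y | dForm (x (n + 1)) y ≤ r (n + 1)} ⊆ {y | dForm (x n) y ≤ r n}) ∧
      (⋂ n, {y | dForm (x n) y ≤ r n}) = ∅ := by
  classical
  set ε : ℕ → ℝ := fun n => 1 - (2 : ℝ)⁻¹ ^ n with hε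
  have hε_lt : ∀ n, ε n < ε (n + 1) := by
    intro n
    simp only [hε]
    have : (2 : ℝ)⁻¹ ^ (n + 1) < (2 : ℝ)⁻¹ ^ n :=
      pow_lt_pow_right_of_lt_one₀ (by norm_num) (by norm_num) (Nat.lt_succ_self n)
    linarith
  have hε_le_one : ∀ n, ε n ≤ 1 := by
    intro n
    simp only [hε]
    have : (0:ℝ) < (2 : ℝ)⁻¹ ^ n := by positivity
    linarith
  set x : ℕ → (ℕ →₀ HahnSeries ℝ ℝ) := fun n =>
    ∑ i ∈ Finset.range n, Finsupp.single i (HahnSeries.single (ε i) (1 : ℝ)) with hx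
  set r : ℕ → ℝ := fun n => (2 : ℝ) ^ (-(2 * ε n)) with hr
  have hquarter : (4 : ℝ)⁻¹ = (2 : ℝ) ^ (-(2:ℝ)) := by
    rw [show ((-2:ℝ)) = ((-2 : ℤ) : ℝ) by norm_num, Real.rpow_intCast]
    norm_num
  refine ⟨x, r, ?_, by norm_num, ?_, ?_⟩
  · intro n
    rw [hquarter, hr]
    rw [Real.rpow_le_rpow_left_iff (by norm_num : (1:ℝ) < 2), neg_le_neg_iff]
    have := hε_le_one n
    linarith
  · -- nestedness
    intro n y hy
    simp only [Set.mem_setOf_eq, hr] at hy ⊢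
    rw [dForm_le_iff] at hy ⊢
    have hcoord := fun i => coord_le_of_qForm hy i
    apply le_orderTop_qForm
    intro i
    have hdecomp : (x n - y) i = (x n - x (n + 1)) i + (x (n + 1) - y) i := by
      simp only [Finsupp.sub_apply]; ring
    rw [hdecomp]
    refine le_trans (le_min ?_ ?_) min_orderTop_le_orderTop_add
    · -- order of (x n - x (n+1)) i
      have hdiff : x n - x (n + 1) =
          -Finsupp.single n (HahnSeries.single (ε n) (1 : ℝ)) := by
        rw [hx]
        simp only [Finset.sum_range_succ]
        abel
      rw [hdiff]
      by_cases hin : i = n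
      · subst hin
        simp only [Finsupp.neg_apply, Finsupp.single_eq_same, orderTop_neg]
        exact_mod_cast orderTop_single_le
      · rw [Finsupp.neg_apply, Finsupp.single_eq_of_ne' (fun h => hin h.symm)]
        simp
    · exact le_trans (by exact_mod_cast (hε_lt n).le) (hcoord i)
  · -- empty intersection
    rw [Set.eq_empty_iff_forall_notMem]
    intro y hy
    simp only [Set.mem_iInter, Set.mem_setOf_eq] at hy
    obtain ⟨N, hN⟩ := y.support.exists_nat_subset_range
    have hyN : y N = 0 := by
      by_contra h
      exact absurd (Finset.mem_range.mp (hN (Finsupp.mem_support_iff.mpr h)))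
        (lt_irrefl N).elim
    have hball := hy (N + 1)
    rw [hr, dForm_le_iff] at hball
    have hco := coord_le_of_qForm hball N
    have hxN : (x (N + 1)) N = HahnSeries.single (ε N) (1 : ℝ) := by
      rw [hx]
      simp only [Finsupp.finset_sum_apply]
      rw [Finset.sum_eq_single N]
      · exact Finsupp.single_eq_same
      · intro b _ hb
        exact Finsupp.single_eq_of_ne' hb
      · intro h; exact absurd (Finset.self_mem_range_succ N) h
    rw [Finsupp.sub_apply, hxN, hyN, sub_zero, orderTop_single one_ne_zero] at hco
    have : ε (N + 1) ≤ ε N := by exact_mod_cast hco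
    exact absurd this (not_le.mpr (hε_lt N))
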